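/- Let R be the ring of integers of a number field, k ≥ 2, and a ∈ R nonzero. Define c₂(a) = Π_{𝔭^k ⊇ (a)} (1 − 1/N(𝔭^k)) · Π_{𝔭^k ⊉ (a)} (1 − 2/N(𝔭^k)), and σ_𝔡 = (1/N(𝔡^k)) Π_{𝔭 ∤ 𝔡}(1 − 2/N(𝔭^k)) for squarefree 𝔡. Then c₂(a) = Σ_{𝔡 squarefree, 𝔡^k ⊇ (a)} σ_𝔡, and the sum converges absolutely. -/

import Mathlib

open scoped NumberField Classical

/-- `σ_𝔡 = (1/N(𝔡^k)) Π_{𝔭 ∤ 𝔡}(1 - 2/N(𝔭^k))` for a squarefree ideal `𝔡`. -/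
noncomputable def sigmaD {K : Type*} [Field K] [NumberField K] (k : ℕ) (𝔡 : Ideal (𝓞 K)) : ℝ :=
  ((Ideal.absNorm (𝔡 ^ k) : ℝ))⁻¹ *
    ∏' 𝔭 : {𝔭 : Ideal (𝓞 K) // 𝔭.IsPrime ∧ 𝔭 ≠ ⊥ ∧ ¬ 𝔭 ∣ 𝔡},
      (1 - 2 / (Ideal.absNorm ((𝔭 : Ideal (𝓞 K)) ^ k) : ℝ))

/-- The second correlation function
`c₂(a) = Π_{𝔭^k ∣ (a)} (1 - 1/N(𝔭^k)) · Π_{𝔭^k ∤ (a)} (1 - 2/N(𝔭^k))`. -/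
noncomputable def cTwo {K : Type*} [Field K] [NumberField K] (k : ℕ) (a : 𝓞 K) : ℝ :=
  (∏' 𝔭 : {𝔭 : Ideal (𝓞 K) // 𝔭.IsPrime ∧ 𝔭 ≠ ⊥ ∧ 𝔭 ^ k ∣ Ideal.span {a}},
      (1 - ((Ideal.absNorm ((𝔭 : Ideal (𝓞 K)) ^ k) : ℝ))⁻¹)) *
    ∏' 𝔭 : {𝔭 : Ideal (𝓞 K) // 𝔭.IsPrime ∧ 𝔭 ≠ ⊥ ∧ ¬ 𝔭 ^ k ∣ Ideal.span {a}},
      (1 - 2 * ((Ideal.absNorm ((𝔭 : Ideal (𝓞 K)) ^ k) : ℝ))⁻¹)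

set_option maxHeartbeats 1000000

namespace Stmt10Aux

open Ideal UniqueFactorizationMonoid

variable {K : Type*} [Field K] [NumberField K]

/-- The type of nonzero prime ideals of `𝓞 K`. -/
abbrev A' (K : Type*) [Field K] [NumberField K] := {𝔭 : Ideal (𝓞 K) // 𝔭.IsPrime ∧ 𝔭 ≠ ⊥}

lemma two_le_norm (x : A' K) : 2 ≤ Ideal.absNorm x.1 := by
  have h0 : Ideal.absNorm x.1 ≠ 0 := by
    simpa [Ideal.absNorm_eq_zero_iff] using x.2.2
  have h1 : Ideal.absNorm x.1 ≠ 1 := by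
    simpa [Ideal.absNorm_eq_one_iff] using x.2.1.ne_top
  omega

lemma card_le_rank {n : ℕ} (hn : 2 ≤ n) (s : Finset (Ideal (𝓞 K)))
    (hs : ∀ p ∈ s, p.IsPrime ∧ p ≠ ⊥ ∧ Ideal.absNorm p = n) :
    s.card ≤ Fintype.card (Module.Free.ChooseBasisIndex ℤ (𝓞 K)) := by
  have hprime : ∀ p ∈ s, Prime p := fun p hp => Ideal.prime_of_isPrime (hs p hp).2.1 (hs p hp).1
  have hdvd : ∀ p ∈ s, p ∣ Ideal.span {algebraMap ℤ (𝓞 K) (n : ℤ)} := by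
    intro p hp
    rw [Ideal.dvd_iff_le, Ideal.span_le, Set.singleton_subset_iff]
    have hm := Ideal.absNorm_mem p
    rw [(hs p hp).2.2] at hm
    simpa using hm
  have h1 : (∏ p ∈ s, p) ∣ Ideal.span {algebraMap ℤ (𝓞 K) (n : ℤ)} :=
    Finset.prod_primes_dvd _ hprime hdvd
  have h2 := map_dvd Ideal.absNorm h1
  rw [map_prod, Finset.prod_congr rfl (fun p hp => (hs p hp).2.2), Finset.prod_const,
    Ideal.absNorm_span_singleton,
    Algebra.norm_algebraMap_of_basis (Module.Free.chooseBasis ℤ (𝓞 K))] at h2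
  rw [Int.natAbs_pow] at h2
  simp only [Int.natAbs_natCast] at h2
  exact (Nat.pow_dvd_pow_iff_le_right hn).1 h2

lemma summable_inv_pow_norm {k : ℕ} (hk : 2 ≤ k) :
    Summable (fun x : A' K => ((Ideal.absNorm x.1 : ℝ) ^ k)⁻¹) := by
  set d := Fintype.card (Module.Free.ChooseBasisIndex ℤ (𝓞 K)) with hd
  set c : A' K → ℕ := fun x => Ideal.absNorm x.1 with hc
  rw [← (Equiv.sigmaFiberEquiv c).summable_iff]
  have hfin : ∀ n : ℕ, Finite {x : A' K // c x = n} := by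
    intro n
    have h1 : {I : Ideal (𝓞 K) | Ideal.absNorm I = n}.Finite := Ideal.finite_setOf_absNorm_eq n
    haveI := h1.to_subtype
    refine Finite.of_injective
      (fun x => (⟨x.1.1, x.2⟩ : {I : Ideal (𝓞 K) | Ideal.absNorm I = n})) ?_
    intro x y h
    have h' : x.1.1 = y.1.1 := Subtype.mk_eq_mk.mp h
    exact Subtype.ext (Subtype.ext h')
  have hnn : ∀ x : (Σ n : ℕ, {x : A' K // c x = n}),
      0 ≤ ((Ideal.absNorm ((Equiv.sigmaFiberEquiv c) x).1 : ℝ) ^ k)⁻¹ := by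
    intro x; positivity
  refine (summable_sigma_of_nonneg hnn).2 ⟨fun n => ?_, ?_⟩
  · haveI := hfin n
    exact Summable.of_finite
  · -- compare with d * (n^2)⁻¹
    have hmaj : Summable (fun n : ℕ => (d : ℝ) * ((n : ℝ) ^ 2)⁻¹) := by
      have := (Real.summable_one_div_nat_pow (p := 2)).2 (by norm_num)
      simpa [one_div] using this.mul_left (d : ℝ)
    refine Summable.of_nonneg_of_le (fun n => ?_) (fun n => ?_) hmaj
    · exact tsum_nonneg fun y => hnn ⟨n, y⟩
    · haveI := hfin n
      haveI : Fintype {x : A' K // c x = n} := Fintype.ofFinite _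
      rw [tsum_fintype]
      have hval : ∀ y : {x : A' K // c x = n},
          ((Ideal.absNorm ((Equiv.sigmaFiberEquiv c) ⟨n, y⟩).1 : ℝ) ^ k)⁻¹
            = (((n : ℝ)) ^ k)⁻¹ := by
        intro y
        simp only [Equiv.sigmaFiberEquiv, Equiv.coe_fn_mk]
        rw [show Ideal.absNorm y.1.1 = n from y.2]
      rw [Finset.sum_congr rfl (fun y _ => hval y), Finset.sum_const, Finset.card_univ,
        nsmul_eq_mul]
      rcases le_or_gt 2 n with hn | hn
      · have hcard : Fintype.card {x : A' K // c x = n} ≤ d := by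
          have := card_le_rank (K := K) hn
            ((Finset.univ : Finset {x : A' K // c x = n}).image (fun x => x.1.1))
            (by
              intro p hp
              simp only [Finset.mem_image] at hp
              obtain ⟨x, -, rfl⟩ := hp
              exact ⟨x.1.2.1, x.1.2.2, x.2⟩)
          rwa [Finset.card_image_of_injective _
            (fun x y h => Subtype.ext (Subtype.ext h)), Finset.card_univ] at this
        have hpow : ((n : ℝ) ^ k)⁻¹ ≤ ((n : ℝ) ^ 2)⁻¹ := by
          apply inv_anti₀ (by positivity)
          exact pow_le_pow_right₀ (by exact_mod_cast hn.trans' (by norm_num)) hk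
        exact mul_le_mul (by exact_mod_cast hcard) hpow (by positivity) (by positivity)
      · -- n ≤ 1 : fiber is empty
        haveI : IsEmpty {x : A' K // c x = n} := by
          constructor
          rintro ⟨x, hx⟩
          have h2 := two_le_norm x
          have hx' : Ideal.absNorm x.1 = n := hx
          omega
        rw [Fintype.card_eq_zero]
        simp only [Nat.cast_zero, zero_mul]
        positivity

/-- The tail factor `1 - 2/N(𝔭^k)`. -/
noncomputable def fP (k : ℕ) (x : A' K) : ℝ := 1 - 2 * ((Ideal.absNorm (x.1 ^ k) : ℝ))⁻¹

lemma norm_pow_cast (k : ℕ) (x : A' K) :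
    ((Ideal.absNorm (x.1 ^ k) : ℝ)) = (Ideal.absNorm x.1 : ℝ) ^ k := by
  rw [map_pow]; push_cast; ring

lemma four_le_norm_pow {k : ℕ} (hk : 2 ≤ k) (x : A' K) :
    (4 : ℝ) ≤ (Ideal.absNorm (x.1 ^ k) : ℝ) := by
  rw [norm_pow_cast]
  have h2 : (2 : ℝ) ≤ (Ideal.absNorm x.1 : ℝ) := by exact_mod_cast two_le_norm x
  calc (4 : ℝ) = 2 ^ 2 := by norm_num
    _ ≤ 2 ^ k := pow_le_pow_right₀ one_le_two hk
    _ ≤ (Ideal.absNorm x.1 : ℝ) ^ k := pow_le_pow_left₀ (by norm_num) h2 k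

lemma half_le_fP {k : ℕ} (hk : 2 ≤ k) (x : A' K) : (1/2 : ℝ) ≤ fP k x := by
  have h4 := four_le_norm_pow (K := K) hk x
  have hpos : (0:ℝ) < (Ideal.absNorm (x.1 ^ k) : ℝ) := lt_of_lt_of_le (by norm_num) h4
  have : 2 * ((Ideal.absNorm (x.1 ^ k) : ℝ))⁻¹ ≤ 1/2 := by
    rw [mul_inv_le_iff₀ hpos]; linarith
  unfold fP; linarith

lemma fP_pos {k : ℕ} (hk : 2 ≤ k) (x : A' K) : 0 < fP k x :=
  lt_of_lt_of_le (by norm_num) (half_le_fP hk x)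

lemma abs_log_fP_le {k : ℕ} (hk : 2 ≤ k) (x : A' K) :
    |Real.log (fP k x)| ≤ 4 * ((Ideal.absNorm x.1 : ℝ) ^ k)⁻¹ := by
  set t : ℝ := 2 * ((Ideal.absNorm (x.1 ^ k) : ℝ))⁻¹ with ht
  have h4 := four_le_norm_pow (K := K) hk x
  have hpos : (0:ℝ) < (Ideal.absNorm (x.1 ^ k) : ℝ) := lt_of_lt_of_le (by norm_num) h4
  have ht0 : 0 < t := by positivity
  have ht2 : t ≤ 1/2 := by
    rw [ht, mul_inv_le_iff₀ hpos]; linarith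
  have hf : fP k x = 1 - t := rfl
  have hfpos : 0 < 1 - t := by linarith
  have hlog : Real.log (1 - t) ≤ 0 := Real.log_nonpos (by linarith) (by linarith)
  have hkey : -Real.log (1 - t) ≤ 2 * t := by
    have h1 : Real.log (1 - t)⁻¹ ≤ (1 - t)⁻¹ - 1 :=
      Real.log_le_sub_one_of_pos (by positivity)
    rw [Real.log_inv] at h1
    have h2 : (1 - t)⁻¹ - 1 ≤ 2 * t := by
      rw [sub_le_iff_le_add, inv_le_iff_one_le_mul₀ hfpos]
      nlinarith
    linarith
  have habs : |Real.log (fP k x)| = -Real.log (1 - t) := by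
    rw [hf, abs_of_nonpos hlog]
  rw [habs]
  have hteq : 2 * t = 4 * ((Ideal.absNorm x.1 : ℝ) ^ k)⁻¹ := by
    rw [ht, ← norm_pow_cast]; ring
  linarith [hkey]

lemma summable_abs_log_fP {k : ℕ} (hk : 2 ≤ k) :
    Summable (fun x : A' K => |Real.log (fP k x)|) := by
  refine Summable.of_nonneg_of_le (fun x => abs_nonneg _) (fun x => abs_log_fP_le hk x) ?_
  simpa using (summable_inv_pow_norm (K := K) hk).mul_left 4

lemma multipliable_fP_on {k : ℕ} (hk : 2 ≤ k) (s : Set (A' K)) :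
    Multipliable ((fP k) ∘ (Subtype.val) : s → ℝ) := by
  have hsum : Summable (fun x : s => Real.log (fP k x.1)) :=
    ((summable_abs_log_fP (K := K) hk).of_abs).subtype s
  exact Real.multipliable_of_summable_log (fun x => fP_pos hk x.1) hsum

lemma tprod_set_congr {β : Type*} {s t : Set β} (h : s = t) (g : β → ℝ) :
    ∏' x : s, g x = ∏' x : t, g x := by rw [h]

/-- Splitting a tprod over `↑v ∪ w` (v a finset, disjoint from w). -/
lemma tprod_split {k : ℕ} (hk : 2 ≤ k) (v : Finset (A' K)) (w : Set (A' K))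
    (hd : Disjoint (↑v : Set (A' K)) w) :
    ∏' x : ↥((↑v : Set (A' K)) ∪ w), fP k x.1 = (∏ x ∈ v, fP k x) * ∏' x : w, fP k x.1 := by
  rw [Multipliable.tprod_union_disjoint hd (multipliable_fP_on hk _) (multipliable_fP_on hk _)]
  congr 1
  exact v.tprod_subtype (fP k)

/-- Repackaging the subtype with three conjuncts. -/
def eQ (Q : Ideal (𝓞 K) → Prop) :
    {𝔭 : Ideal (𝓞 K) // 𝔭.IsPrime ∧ 𝔭 ≠ ⊥ ∧ Q 𝔭} ≃ {x : A' K // Q x.1} where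
  toFun p := ⟨⟨p.1, p.2.1, p.2.2.1⟩, p.2.2.2⟩
  invFun x := ⟨x.1.1, x.1.2.1, x.1.2.2, x.2⟩
  left_inv _ := rfl
  right_inv _ := rfl

lemma tprod_eQ (Q : Ideal (𝓞 K) → Prop) (g : Ideal (𝓞 K) → ℝ) :
    ∏' p : {𝔭 : Ideal (𝓞 K) // 𝔭.IsPrime ∧ 𝔭 ≠ ⊥ ∧ Q 𝔭}, g p.1
      = ∏' x : {x : A' K // Q x.1}, g x.1.1 :=
  (eQ Q).tprod_eq (fun x : {x : A' K // Q x.1} => g x.1.1)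

end Stmt10Aux

open Stmt10Aux Ideal UniqueFactorizationMonoid

/-- For `k ≥ 2` and nonzero `a ∈ 𝓞 K`,
`c₂(a) = Σ_{𝔡 squarefree, 𝔡^k ∣ (a)} σ_𝔡`, and the sum converges absolutely. -/
theorem stmt10 (K : Type*) [Field K] [NumberField K] (k : ℕ) (hk : 2 ≤ k)
    (a : 𝓞 K) (ha : a ≠ 0) :
    Summable (fun 𝔡 : {𝔡 : Ideal (𝓞 K) // Squarefree 𝔡 ∧ 𝔡 ^ k ∣ Ideal.span {a}} =>
      sigmaD k (𝔡 : Ideal (𝓞 K))) ∧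
    cTwo k a =
      ∑' 𝔡 : {𝔡 : Ideal (𝓞 K) // Squarefree 𝔡 ∧ 𝔡 ^ k ∣ Ideal.span {a}},
        sigmaD k (𝔡 : Ideal (𝓞 K)) := by

  classical
  have hk0 : k ≠ 0 := by omega
  have hRa0 : Ideal.span {a} ≠ ⊥ := by simpa [Ideal.span_singleton_eq_bot] using ha
  haveI : Fintype {I : Ideal (𝓞 K) // I ∣ Ideal.span {a}} :=
    UniqueFactorizationMonoid.fintypeSubtypeDvd _ hRa0
  have hTprime : ∀ x : A' K, Prime x.1 := fun x => Ideal.prime_of_isPrime x.2.2 x.2.1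
  -- the set of relevant primes
  set S : Set (A' K) := {x : A' K | x.1 ^ k ∣ Ideal.span {a}} with hSdef
  have hSfin : S.Finite := by
    haveI : Finite ↥S := by
      refine Finite.of_injective (fun x => (⟨x.1.1, dvd_trans (dvd_pow_self _ hk0) x.2⟩ :
        {I : Ideal (𝓞 K) // I ∣ Ideal.span {a}})) ?_
      intro x y h
      exact Subtype.ext (Subtype.ext (Subtype.mk_eq_mk.mp h))
    exact S.toFinite
  set Sf : Finset (A' K) := hSfin.toFinset with hSfdef
  have hmemSf : ∀ x : A' K, x ∈ Sf ↔ x.1 ^ k ∣ Ideal.span {a} := fun x => hSfin.mem_toFinset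
  have hcoeSf : (↑Sf : Set (A' K)) = S := hSfin.coe_toFinset
  -- the index type of the sum is finite
  haveI hDfin : Finite {𝔡 : Ideal (𝓞 K) // Squarefree 𝔡 ∧ 𝔡 ^ k ∣ Ideal.span {a}} := by
    refine Finite.of_injective (fun d => (⟨d.1, dvd_trans (dvd_pow_self _ hk0) d.2.2⟩ :
      {I : Ideal (𝓞 K) // I ∣ Ideal.span {a}})) ?_
    intro x y h
    exact Subtype.ext (Subtype.mk_eq_mk.mp h)
  haveI : Fintype {𝔡 : Ideal (𝓞 K) // Squarefree 𝔡 ∧ 𝔡 ^ k ∣ Ideal.span {a}} :=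
    Fintype.ofFinite _
  refine ⟨Summable.of_finite, ?_⟩
  -- notation
  set u : A' K → ℝ := fun x => ((Ideal.absNorm (x.1 ^ k) : ℝ))⁻¹ with hu
  set C : ℝ := ∏' x : ↥(Sᶜ), fP k x.1 with hC
  -- LHS
  have hcTwo : cTwo k a = (∏ x ∈ Sf, (1 - u x)) * C := by
    unfold cTwo
    congr 1
    · rw [tprod_eQ (fun 𝔭 => 𝔭 ^ k ∣ Ideal.span {a})
        (fun I => 1 - ((Ideal.absNorm (I ^ k) : ℝ))⁻¹)]
      have h1 : (∏' x : {x : A' K // x.1 ^ k ∣ Ideal.span {a}},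
          (1 - ((Ideal.absNorm (x.1.1 ^ k) : ℝ))⁻¹))
          = ∏' x : ↥S, (1 - u x.1) := rfl
      rw [h1, tprod_set_congr hcoeSf.symm (fun x => 1 - u x)]
      exact Sf.tprod_subtype (fun x => 1 - u x)
    · rw [tprod_eQ (fun 𝔭 => ¬ 𝔭 ^ k ∣ Ideal.span {a})
        (fun I => 1 - 2 * ((Ideal.absNorm (I ^ k) : ℝ))⁻¹)]
      rfl
  -- the product formula for squarefree divisors
  have hprodD : ∀ 𝔡 : {𝔡 : Ideal (𝓞 K) // Squarefree 𝔡 ∧ 𝔡 ^ k ∣ Ideal.span {a}},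
      ∏ x ∈ Sf.filter (fun x => x.1 ∣ 𝔡.1), x.1 = 𝔡.1 := by
    intro 𝔡
    have hd0 : 𝔡.1 ≠ ⊥ := by
      intro h
      apply hRa0
      have h2 := 𝔡.2.2
      rw [h, ← Ideal.zero_eq_bot, zero_pow hk0, zero_dvd_iff] at h2
      rw [← Ideal.zero_eq_bot]
      exact h2
    have hd0' : 𝔡.1 ≠ 0 := by rwa [Ideal.zero_eq_bot]
    have hnodup : (normalizedFactors 𝔡.1).Nodup :=
      (squarefree_iff_nodup_normalizedFactors hd0').1 𝔡.2.1
    have hstep : ∏ x ∈ Sf.filter (fun x => x.1 ∣ 𝔡.1), x.1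
        = ∏ p ∈ (normalizedFactors 𝔡.1).toFinset, p := by
      refine Finset.prod_bij (fun x _ => x.1) ?_ ?_ ?_ (fun _ _ => rfl)
      · intro x hx
        rw [Finset.mem_filter] at hx
        rw [Multiset.mem_toFinset, Ideal.mem_normalizedFactors_iff hd0]
        exact ⟨x.2.1, Ideal.dvd_iff_le.1 hx.2⟩
      · intro x _ y _ h
        exact Subtype.ext h
      · intro p hp
        rw [Multiset.mem_toFinset] at hp
        have hprime : Prime p := prime_of_normalized_factor p hp
        have hmem := (Ideal.mem_normalizedFactors_iff hd0).1 hp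
        have hpne : p ≠ ⊥ := by rw [← Ideal.zero_eq_bot]; exact hprime.ne_zero
        have hpdvd : p ∣ 𝔡.1 := Ideal.dvd_iff_le.2 hmem.2
        refine ⟨⟨p, hmem.1, hpne⟩, ?_, rfl⟩
        rw [Finset.mem_filter]
        exact ⟨(hmemSf _).2 (dvd_trans (pow_dvd_pow_of_dvd hpdvd k) 𝔡.2.2), hpdvd⟩
    rw [hstep]
    have hded : (normalizedFactors 𝔡.1).toFinset.val = normalizedFactors 𝔡.1 := by
      rw [Multiset.toFinset_val, Multiset.dedup_eq_self.2 hnodup]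
    rw [Finset.prod_eq_multiset_prod, Multiset.map_id', hded]
    exact associated_iff_eq.mp (prod_normalizedFactors hd0')
  -- per-term description of sigmaD
  have hterm : ∀ 𝔡 : {𝔡 : Ideal (𝓞 K) // Squarefree 𝔡 ∧ 𝔡 ^ k ∣ Ideal.span {a}},
      sigmaD k 𝔡.1 =
        ((∏ x ∈ Sf.filter (fun x => x.1 ∣ 𝔡.1), u x) *
          ∏ x ∈ Sf \ Sf.filter (fun x => x.1 ∣ 𝔡.1), fP k x) * C := by
    intro 𝔡
    set T : Finset (A' K) := Sf.filter (fun x => x.1 ∣ 𝔡.1) with hT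
    have himp : ∀ x : A' K, x.1 ∣ 𝔡.1 → x ∈ S := fun x h =>
      dvd_trans (pow_dvd_pow_of_dvd h k) 𝔡.2.2
    have hsets : {x : A' K | ¬ x.1 ∣ 𝔡.1} = (↑(Sf \ T) : Set (A' K)) ∪ Sᶜ := by
      ext x
      simp only [Set.mem_setOf_eq, Set.mem_union, Finset.mem_coe, Finset.mem_sdiff, hT,
        Finset.mem_filter, Set.mem_compl_iff]
      constructor
      · intro hnd
        by_cases hxS : x ∈ S
        · exact Or.inl ⟨(hmemSf x).2 hxS, fun h => hnd h.2⟩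
        · exact Or.inr hxS
      · rintro (⟨-, hnd⟩ | hxS)
        · intro hdvd
          exact hnd ⟨(hmemSf x).2 (himp x hdvd), hdvd⟩
        · intro hdvd
          exact hxS (himp x hdvd)
    have hsub : (↑(Sf \ T) : Set (A' K)) ⊆ S := by
      rw [← hcoeSf]
      exact Finset.coe_subset.2 Finset.sdiff_subset
    have hdisj : Disjoint (↑(Sf \ T) : Set (A' K)) (Sᶜ) :=
      disjoint_compl_right.mono_left hsub
    have htp : ∏' 𝔭 : {𝔭 : Ideal (𝓞 K) // 𝔭.IsPrime ∧ 𝔭 ≠ ⊥ ∧ ¬ 𝔭 ∣ 𝔡.1},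
        (1 - 2 / (Ideal.absNorm (𝔭.1 ^ k) : ℝ))
        = (∏ x ∈ Sf \ T, fP k x) * C := by
      have hdiv : (fun 𝔭 : {𝔭 : Ideal (𝓞 K) // 𝔭.IsPrime ∧ 𝔭 ≠ ⊥ ∧ ¬ 𝔭 ∣ 𝔡.1} =>
          (1 - 2 / (Ideal.absNorm (𝔭.1 ^ k) : ℝ)))
          = fun 𝔭 => (1 - 2 * ((Ideal.absNorm (𝔭.1 ^ k) : ℝ))⁻¹) := by
        funext 𝔭; rw [div_eq_mul_inv]
      rw [hdiv, tprod_eQ (fun 𝔭 => ¬ 𝔭 ∣ 𝔡.1)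
        (fun I => 1 - 2 * ((Ideal.absNorm (I ^ k) : ℝ))⁻¹)]
      have h3 : (∏' x : {x : A' K // ¬ x.1 ∣ 𝔡.1},
          (1 - 2 * ((Ideal.absNorm (x.1.1 ^ k) : ℝ))⁻¹))
          = ∏' x : ↥{x : A' K | ¬ x.1 ∣ 𝔡.1}, fP k x.1 := rfl
      rw [h3, tprod_set_congr hsets (fP k)]
      exact tprod_split hk (Sf \ T) (Sᶜ) hdisj
    have hnorm : ((Ideal.absNorm (𝔡.1 ^ k) : ℝ))⁻¹ = ∏ x ∈ T, u x := by
      conv_lhs => rw [← hprodD 𝔡]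
      rw [← Finset.prod_pow, map_prod, Nat.cast_prod, ← Finset.prod_inv_distrib]
    show ((Ideal.absNorm (𝔡.1 ^ k) : ℝ))⁻¹ * _ = _
    rw [htp, hnorm]
    ring
  -- squarefree products over subsets of Sf
  have hB3 : ∀ T ∈ Sf.powerset,
      Squarefree (∏ x ∈ T, x.1) ∧ (∏ x ∈ T, x.1) ^ k ∣ Ideal.span {a} := by
    intro T hTs
    rw [Finset.mem_powerset] at hTs
    constructor
    · have hm : ∏ x ∈ T, x.1 = (Multiset.map Subtype.val T.val).prod :=
        Finset.prod_eq_multiset_prod T Subtype.val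
      have hall : ∀ p ∈ Multiset.map Subtype.val T.val, Prime p := by
        intro p hp
        obtain ⟨x, -, rfl⟩ := Multiset.mem_map.1 hp
        exact hTprime x
      have hne : (∏ x ∈ T, x.1) ≠ 0 :=
        Finset.prod_ne_zero_iff.2 (fun x _ => (hTprime x).ne_zero)
      rw [squarefree_iff_nodup_normalizedFactors hne, hm,
        normalizedFactors_prod_of_prime hall]
      exact Multiset.Nodup.map Subtype.coe_injective T.nodup
    · rw [← Finset.prod_pow]
      refine Finset.prod_dvd_of_coprime ?_ ?_
      · intro x hx y hy hne
        have hxm : x.1.IsMaximal := x.2.1.isMaximal x.2.2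
        have hym : y.1.IsMaximal := y.2.1.isMaximal y.2.2
        have hcop : IsCoprime x.1 y.1 := Ideal.isCoprime_iff_sup_eq.2
          (hxm.coprime_of_ne hym (fun h => hne (Subtype.ext h)))
        exact hcop.pow
      · intro x hx
        exact (hmemSf x).1 (hTs hx)
  -- the inverse of the bijection
  have hB4 : ∀ T ∈ Sf.powerset, Sf.filter (fun x => x.1 ∣ ∏ y ∈ T, y.1) = T := by
    intro T hTs
    rw [Finset.mem_powerset] at hTs
    ext x
    simp only [Finset.mem_filter]
    constructor
    · rintro ⟨hxSf, hdvd⟩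
      obtain ⟨y, hy, hxy⟩ := (hTprime x).exists_mem_finset_dvd hdvd
      have hxy' : x = y := Subtype.ext ((prime_dvd_prime_iff_eq (hTprime x) (hTprime y)).1 hxy)
      exact hxy' ▸ hy
    · intro hxT
      refine ⟨hTs hxT, ?_⟩
      exact Finset.dvd_prod_of_mem _ hxT
  -- assemble
  calc cTwo k a = (∏ x ∈ Sf, (1 - u x)) * C := hcTwo
    _ = (∏ x ∈ Sf, (u x + fP k x)) * C := by
        congr 1
        refine Finset.prod_congr rfl (fun x _ => ?_)
        simp only [hu, fP]
        ring
    _ = (∑ T ∈ Sf.powerset, (∏ x ∈ T, u x) * ∏ x ∈ Sf \ T, fP k x) * C := by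
        rw [Finset.prod_add]
    _ = ∑ T ∈ Sf.powerset, ((∏ x ∈ T, u x) * ∏ x ∈ Sf \ T, fP k x) * C := by
        rw [Finset.sum_mul]
    _ = ∑ 𝔡 : {𝔡 : Ideal (𝓞 K) // Squarefree 𝔡 ∧ 𝔡 ^ k ∣ Ideal.span {a}},
          sigmaD k 𝔡.1 := by
        refine (Finset.sum_bij' (fun 𝔡 _ => Sf.filter (fun x => x.1 ∣ 𝔡.1))
          (fun T hT => ⟨∏ x ∈ T, x.1, hB3 T hT⟩) ?_ ?_ ?_ ?_ ?_).symm
        · intro 𝔡 _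
          exact Finset.mem_powerset.2 (Finset.filter_subset _ _)
        · intro T hT
          exact Finset.mem_univ _
        · intro 𝔡 _
          exact Subtype.ext (hprodD 𝔡)
        · intro T hT
          exact hB4 T hT
        · intro 𝔡 _
          exact hterm 𝔡
    _ = ∑' 𝔡 : {𝔡 : Ideal (𝓞 K) // Squarefree 𝔡 ∧ 𝔡 ^ k ∣ Ideal.span {a}},
          sigmaD k 𝔡.1 := (tsum_fintype _).symm
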